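/- The Dic∞-representation V⊗V decomposes as a direct sum of three pairwise non-isomorphic simple subrepresentations: the two-dimensional simple V₂ spanned by v₁⊗v₁ and v₂⊗v₂, the trivial one-dimensional representation spanned by v₂⊗v₁ − v₁⊗v₂, and the one-dimensional representation 𝟙̄ spanned by v₁⊗v₂ + v₂⊗v₁ (on which a acts by 1 and x acts by −1); consequently dim_ℂ End_{Dic∞}(V⊗V) = 3. -/

import Mathlib

open scoped TensorProduct
open Matrix

noncomputable section

/-- `ℂ²`, the standard two-dimensional complex vector space. -/
abbrev V2 : Type := Fin 2 → ℂ

/-- The standard representation of a subgroup `G ≤ GL₂(ℂ)` on `ℂ²`, by matrix-vector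
multiplication. -/
def stdRep (G : Subgroup (GL (Fin 2) ℂ)) : Representation ℂ G V2 where
  toFun g := Matrix.toLin' ((g : GL (Fin 2) ℂ) : Matrix (Fin 2) (Fin 2) ℂ)
  map_one' := by
    simp only [OneMemClass.coe_one, Units.val_one, Matrix.toLin'_one]
    rfl
  map_mul' g h := by
    simp only [MulMemClass.coe_mul, Units.val_mul, Matrix.toLin'_mul]
    rfl

/-- The standard basis vectors `v₁ = bv 0`, `v₂ = bv 1` of `ℂ²`. -/
def bv (s : Fin 2) : V2 := Pi.single s 1

/-- The tensor square `V ⊗ V` of `V = ℂ²` (bundled in `ModuleCat ℂ`). -/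
def TSq : ModuleCat ℂ := ModuleCat.of ℂ (V2 ⊗[ℂ] V2)

/-- The diagonal representation of `G ≤ GL₂(ℂ)` on `V ⊗ V`. -/
def sqRep (G : Subgroup (GL (Fin 2) ℂ)) : Representation ℂ G TSq :=
  (stdRep G).tprod (stdRep G)

/-- The two-dimensional subspace of `V ⊗ V` spanned by `v₁⊗v₁` and `v₂⊗v₂`. -/
def Wtwo : Submodule ℂ TSq :=
  Submodule.span ℂ {bv 0 ⊗ₜ[ℂ] bv 0, bv 1 ⊗ₜ[ℂ] bv 1}

/-- The line in `V ⊗ V` spanned by `v₂⊗v₁ − v₁⊗v₂` (a copy of the trivial representation). -/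
def Wtriv : Submodule ℂ TSq :=
  Submodule.span ℂ {bv 1 ⊗ₜ[ℂ] bv 0 - bv 0 ⊗ₜ[ℂ] bv 1}

/-- The line `𝟙̄` in `V ⊗ V` spanned by `v₁⊗v₂ + v₂⊗v₁`. -/
def Wsign : Submodule ℂ TSq :=
  Submodule.span ℂ {bv 0 ⊗ₜ[ℂ] bv 1 + bv 1 ⊗ₜ[ℂ] bv 0}

/-- The space `End_G(W)` of `G`-equivariant linear endomorphisms of a representation `W`. -/
def equivEnd {G W : Type*} [Group G] [AddCommGroup W] [Module ℂ W]
    (ρ : Representation ℂ G W) : Submodule ℂ (W →ₗ[ℂ] W) where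
  carrier := {f | ∀ g : G, f ∘ₗ ρ g = ρ g ∘ₗ f}
  add_mem' := by
    intro f h hf hh g
    simp only [LinearMap.add_comp, LinearMap.comp_add, hf g, hh g]
  zero_mem' := by
    intro g
    simp only [LinearMap.zero_comp, LinearMap.comp_zero]
  smul_mem' := by
    intro c f hf g
    simp only [LinearMap.smul_comp, LinearMap.comp_smul, hf g]
namespace Aux
def rho (g : GL (Fin 2) ℂ) : V2 ⊗[ℂ] V2 →ₗ[ℂ] V2 ⊗[ℂ] V2 :=
  TensorProduct.map (Matrix.toLin' ((g : GL (Fin 2) ℂ) : Matrix (Fin 2) (Fin 2) ℂ))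
    (Matrix.toLin' ((g : GL (Fin 2) ℂ) : Matrix (Fin 2) (Fin 2) ℂ))

lemma sqRep_eq (G : Subgroup (GL (Fin 2) ℂ)) (g : G) : sqRep G g = rho (g : GL (Fin 2) ℂ) := rfl

lemma rho_mul (g h : GL (Fin 2) ℂ) : rho (g * h) = rho g ∘ₗ rho h := by
  simp [rho, Units.val_mul, Matrix.toLin'_mul, TensorProduct.map_comp]

lemma rho_one : rho 1 = LinearMap.id := by
  simp [rho, Units.val_one, Matrix.toLin'_one]

def TB : Module.Basis (Fin 2 × Fin 2) ℂ (V2 ⊗[ℂ] V2) :=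
  (Pi.basisFun ℂ (Fin 2)).tensorProduct (Pi.basisFun ℂ (Fin 2))

lemma TB_apply (p : Fin 2 × Fin 2) : TB p = bv p.1 ⊗ₜ[ℂ] bv p.2 := by
  obtain ⟨i, j⟩ := p
  rw [TB, Module.Basis.tensorProduct_apply]
  simp [bv, Pi.basisFun_apply]

end Aux
namespace Aux
lemma Wtwo_eq : Wtwo = Submodule.span ℂ {TB (0,0), TB (1,1)} := by
  rw [TB_apply, TB_apply]; rfl
end Aux
namespace Aux
section Act
variable {X A : GL (Fin 2) ℂ} {θ : ℝ}

lemma actX0 (hX : (X : Matrix (Fin 2) (Fin 2) ℂ) = !![0, -1; 1, 0]) :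
    Matrix.toLin' ((X : GL (Fin 2) ℂ) : Matrix (Fin 2) (Fin 2) ℂ) (bv 0) = bv 1 := by
  rw [hX]; funext i; fin_cases i <;> simp [Matrix.toLin'_apply, bv, Matrix.mulVec_single]

lemma actX1 (hX : (X : Matrix (Fin 2) (Fin 2) ℂ) = !![0, -1; 1, 0]) :
    Matrix.toLin' ((X : GL (Fin 2) ℂ) : Matrix (Fin 2) (Fin 2) ℂ) (bv 1) = -bv 0 := by
  rw [hX]; funext i; fin_cases i <;> simp [Matrix.toLin'_apply, bv, Matrix.mulVec_single]

lemma actA0 (hA : (A : Matrix (Fin 2) (Fin 2) ℂ) =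
      !![Complex.exp (θ * Complex.I), 0; 0, Complex.exp (-(θ * Complex.I))]) :
    Matrix.toLin' ((A : GL (Fin 2) ℂ) : Matrix (Fin 2) (Fin 2) ℂ) (bv 0)
      = Complex.exp (θ * Complex.I) • bv 0 := by
  rw [hA]; funext i; fin_cases i <;> simp [Matrix.toLin'_apply, bv, Matrix.mulVec_single]

lemma actA1 (hA : (A : Matrix (Fin 2) (Fin 2) ℂ) =
      !![Complex.exp (θ * Complex.I), 0; 0, Complex.exp (-(θ * Complex.I))]) :
    Matrix.toLin' ((A : GL (Fin 2) ℂ) : Matrix (Fin 2) (Fin 2) ℂ) (bv 1)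
      = (Complex.exp (θ * Complex.I))⁻¹ • bv 1 := by
  rw [hA, ← Complex.exp_neg]
  funext i; fin_cases i <;> simp [Matrix.toLin'_apply, bv, Matrix.mulVec_single]

/-- exponent of `exp(iθ)` by which `A⊗A` scales the basis tensor `TB p`. -/
def expo (p : Fin 2 × Fin 2) : ℤ := (1 - 2*(p.1 : ℤ)) + (1 - 2*(p.2 : ℤ))

lemma rhoA_TB (hA : (A : Matrix (Fin 2) (Fin 2) ℂ) =
      !![Complex.exp (θ * Complex.I), 0; 0, Complex.exp (-(θ * Complex.I))])
    (p : Fin 2 × Fin 2) :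
    rho A (TB p) = (Complex.exp (θ * Complex.I) ^ expo p) • TB p := by
  obtain ⟨i, j⟩ := p
  have hne : Complex.exp (θ * Complex.I) ≠ 0 := Complex.exp_ne_zero _
  fin_cases i <;> fin_cases j <;>
    simp [rho, TB_apply, TensorProduct.map_tmul, actA0 hA, actA1 hA, TensorProduct.smul_tmul',
      TensorProduct.tmul_smul, expo, smul_smul, _root_.zpow_neg, zpow_two, pow_two, _root_.mul_inv_rev]

lemma rhoX_00 (hX : (X : Matrix (Fin 2) (Fin 2) ℂ) = !![0, -1; 1, 0]) :
    rho X (TB (0,0)) = TB (1,1) := by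
  simp [rho, TB_apply, TensorProduct.map_tmul, actX0 hX]

lemma rhoX_11 (hX : (X : Matrix (Fin 2) (Fin 2) ℂ) = !![0, -1; 1, 0]) :
    rho X (TB (1,1)) = TB (0,0) := by
  simp [rho, TB_apply, TensorProduct.map_tmul, actX1 hX, TensorProduct.neg_tmul, TensorProduct.tmul_neg]

lemma rhoX_01 (hX : (X : Matrix (Fin 2) (Fin 2) ℂ) = !![0, -1; 1, 0]) :
    rho X (TB (0,1)) = -TB (1,0) := by
  simp [rho, TB_apply, TensorProduct.map_tmul, actX0 hX, actX1 hX, TensorProduct.neg_tmul, TensorProduct.tmul_neg]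

lemma rhoX_10 (hX : (X : Matrix (Fin 2) (Fin 2) ℂ) = !![0, -1; 1, 0]) :
    rho X (TB (1,0)) = -TB (0,1) := by
  simp [rho, TB_apply, TensorProduct.map_tmul, actX0 hX, actX1 hX, TensorProduct.neg_tmul, TensorProduct.tmul_neg]

end Act
end Aux
namespace Aux
lemma exp_int_ne_one {θ : ℝ} (hθ : Irrational (θ / Real.pi)) (k : ℤ) (hk : k ≠ 0) :
    Complex.exp ((k : ℂ) * (θ * Complex.I)) ≠ 1 := by
  intro h
  rw [Complex.exp_eq_one_iff] at h
  obtain ⟨n, hn⟩ := h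
  have hI : (Complex.I : ℂ) ≠ 0 := Complex.I_ne_zero
  have h2 : (k : ℂ) * θ = n * (2 * Real.pi) :=
    mul_right_cancel₀ hI (by linear_combination hn)
  have h3 : (k : ℝ) * θ = n * (2 * Real.pi) := by
    have := congrArg Complex.re h2
    push_cast at this
    simpa using this
  have hπ : Real.pi ≠ 0 := Real.pi_ne_zero
  have : θ / Real.pi = ((2 * n / k : ℚ) : ℝ) := by
    have hk' : (k : ℝ) ≠ 0 := Int.cast_ne_zero.mpr hk
    push_cast
    field_simp
    linarith [h3]
  exact hθ ⟨_, this.symm⟩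
end Aux
namespace Aux

lemma zpow_exp_ne {θ : ℝ} (hθ : Irrational (θ / Real.pi)) {a b : ℤ} (hab : a ≠ b) :
    Complex.exp (θ * Complex.I) ^ a ≠ Complex.exp (θ * Complex.I) ^ b := by
  intro h
  have hne : Complex.exp (θ * Complex.I) ≠ 0 := Complex.exp_ne_zero _
  have h1 : Complex.exp (θ * Complex.I) ^ (a - b) = 1 := by
    rw [zpow_sub₀ hne, h, div_self (zpow_ne_zero _ hne)]
  rw [← Complex.exp_int_mul] at h1
  exact exp_int_ne_one hθ (a - b) (sub_ne_zero.mpr hab) h1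

def rhoE (g : GL (Fin 2) ℂ) : (V2 ⊗[ℂ] V2) ≃ₗ[ℂ] (V2 ⊗[ℂ] V2) :=
  LinearEquiv.ofLinear (rho g) (rho g⁻¹)
    (by rw [← rho_mul]; simp [rho_one]) (by rw [← rho_mul]; simp [rho_one])

lemma rho_inv_apply (g : GL (Fin 2) ℂ) (z : V2 ⊗[ℂ] V2) : rho g⁻¹ (rho g z) = z := by
  rw [← LinearMap.comp_apply, ← rho_mul]; simp [rho_one]

lemma rho_apply_inv (g : GL (Fin 2) ℂ) (z : V2 ⊗[ℂ] V2) : rho g (rho g⁻¹ z) = z := by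
  rw [← LinearMap.comp_apply, ← rho_mul]; simp [rho_one]

/-- The subgroup of elements preserving a subspace `W`. -/
def presSub (W : Submodule ℂ (V2 ⊗[ℂ] V2)) : Subgroup (GL (Fin 2) ℂ) where
  carrier := {g | ∀ z ∈ W, rho g z ∈ W}
  one_mem' := by intro z hz; rw [rho_one]; exact hz
  mul_mem' := by
    intro g h hg hh z hz
    rw [rho_mul]
    exact hg _ (hh _ hz)
  inv_mem' := by
    intro g hg z hz
    have hle : Submodule.map (rho g) W ≤ W := by
      rintro _ ⟨w, hw, rfl⟩; exact hg _ hw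
    have heq : Submodule.map (rho g) W = W := by
      apply Submodule.eq_of_le_of_finrank_le hle
      exact le_of_eq ((rhoE g).finrank_map_eq W).symm
    rw [← heq] at hz
    obtain ⟨w, hw, rfl⟩ := hz
    rw [rho_inv_apply]
    exact hw

/-- The stabilizer subgroup of a vector. -/
def fixSub (v : V2 ⊗[ℂ] V2) : Subgroup (GL (Fin 2) ℂ) where
  carrier := {g | rho g v = v}
  one_mem' := by simp [rho_one]
  mul_mem' := by intro g h hg hh; simp only [Set.mem_setOf_eq] at *; rw [rho_mul]; simp [hh, hg]
  inv_mem' := by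
    intro g hg
    simp only [Set.mem_setOf_eq] at *
    conv_lhs => rw [← hg]
    exact rho_inv_apply g v

/-- The subgroup of elements whose action commutes with a linear map `f`. -/
def commSub (f : V2 ⊗[ℂ] V2 →ₗ[ℂ] V2 ⊗[ℂ] V2) : Subgroup (GL (Fin 2) ℂ) where
  carrier := {g | f ∘ₗ rho g = rho g ∘ₗ f}
  one_mem' := by simp [rho_one]
  mul_mem' := by
    intro g h hg hh
    simp only [Set.mem_setOf_eq] at *
    rw [rho_mul, ← LinearMap.comp_assoc, hg, LinearMap.comp_assoc, hh, LinearMap.comp_assoc]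
  inv_mem' := by
    intro g hg
    simp only [Set.mem_setOf_eq] at *
    apply LinearMap.ext
    intro z
    simp only [LinearMap.comp_apply]
    have := congrArg (fun F => rho g⁻¹ (F (rho g⁻¹ z))) hg.symm
    simpa [LinearMap.comp_apply, rho_apply_inv, rho_inv_apply] using this

lemma mem_of_closure {X A : GL (Fin 2) ℂ} {G : Subgroup (GL (Fin 2) ℂ)}
    (hG : G = Subgroup.closure {X, A}) (S : Subgroup (GL (Fin 2) ℂ))
    (hXS : X ∈ S) (hAS : A ∈ S) : ∀ g : G, (g : GL (Fin 2) ℂ) ∈ S := by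
  intro g
  have : G ≤ S := by
    rw [hG]
    apply Subgroup.closure_le S |>.mpr
    rintro x (rfl | rfl)
    exacts [hXS, hAS]
  exact this g.2

lemma X_mem {X A : GL (Fin 2) ℂ} {G : Subgroup (GL (Fin 2) ℂ)}
    (hG : G = Subgroup.closure {X, A}) : X ∈ G := by
  rw [hG]; exact Subgroup.subset_closure (by simp)

lemma A_mem {X A : GL (Fin 2) ℂ} {G : Subgroup (GL (Fin 2) ℂ)}
    (hG : G = Subgroup.closure {X, A}) : A ∈ G := by
  rw [hG]; exact Subgroup.subset_closure (by simp)

end Aux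
namespace Aux

lemma Wtriv_eq : Wtriv = Submodule.span ℂ {TB (1,0) - TB (0,1)} := by
  rw [TB_apply, TB_apply]; rfl

lemma Wsign_eq : Wsign = Submodule.span ℂ {TB (0,1) + TB (1,0)} := by
  rw [TB_apply, TB_apply]; rfl

lemma crd (p q : Fin 2 × Fin 2) : TB.repr (TB q) p = if q = p then 1 else 0 := by
  simp [Module.Basis.repr_self, Finsupp.single_apply]

lemma wtriv_ne : TB (1,0) - TB (0,1) ≠ 0 := by
  intro h
  have := congrArg (fun v => TB.repr v (1,0)) h
  simp [crd] at this

lemma wsign_ne : TB (0,1) + TB (1,0) ≠ 0 := by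
  intro h
  have := congrArg (fun v => TB.repr v (1,0)) h
  simp [crd] at this

lemma disj_two : Disjoint Wtwo (Wtriv ⊔ Wsign) := by
  rw [Submodule.disjoint_def]
  intro z hz hz'
  rw [Wtwo_eq] at hz
  obtain ⟨a, b, rfl⟩ := (Submodule.mem_span_pair (M := V2 ⊗[ℂ] V2)).mp hz
  replace hz' := (Submodule.mem_sup (M := TSq)).mp hz'
  obtain ⟨y, hy, w, hw, heq⟩ := hz'
  rw [Wtriv_eq] at hy
  obtain ⟨c, rfl⟩ := (Submodule.mem_span_singleton (M := V2 ⊗[ℂ] V2)).mp hy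
  rw [Wsign_eq] at hw
  obtain ⟨d, rfl⟩ := (Submodule.mem_span_singleton (M := V2 ⊗[ℂ] V2)).mp hw
  replace heq : c • (TB (1,0) - TB (0,1)) + d • (TB (0,1) + TB (1,0)) = a • TB (0,0) + b • TB (1,1) := heq
  show a • TB (0,0) + b • TB (1,1) = (0 : V2 ⊗[ℂ] V2)
  have h00 := congrArg (fun v => TB.repr v (0,0)) heq
  have h11 := congrArg (fun v => TB.repr v (1,1)) heq
  simp [crd, Prod.ext_iff] at h00 h11
  rw [← h00, ← h11]
  simp

lemma disj_ts : Disjoint Wtriv Wsign := by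
  rw [Submodule.disjoint_def]
  intro z hz hz'
  rw [Wtriv_eq] at hz
  obtain ⟨c, rfl⟩ := (Submodule.mem_span_singleton (M := V2 ⊗[ℂ] V2)).mp hz
  rw [Wsign_eq] at hz'
  obtain ⟨d, hd⟩ := (Submodule.mem_span_singleton (M := V2 ⊗[ℂ] V2)).mp hz'
  replace hd : d • (TB (0,1) + TB (1,0)) = c • (TB (1,0) - TB (0,1)) := hd
  show c • (TB (1,0) - TB (0,1)) = (0 : V2 ⊗[ℂ] V2)
  have h01 := congrArg (fun v => TB.repr v (0,1)) hd
  have h10 := congrArg (fun v => TB.repr v (1,0)) hd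
  simp [crd, Prod.ext_iff] at h01 h10
  have hc : c = 0 := by
    have := h10.symm.trans h01
    linear_combination this / 2
  rw [hc]; simp

lemma sup_top : Wtwo ⊔ Wtriv ⊔ Wsign = ⊤ := by
  rw [eq_top_iff]
  intro v _
  refine (Submodule.span_le (M := TSq) (p := Wtwo ⊔ Wtriv ⊔ Wsign) (s := Set.range TB)).mpr ?_ (TB.mem_span v)
  rintro _ ⟨p, rfl⟩
  have h00 : TB (0,0) ∈ Wtwo ⊔ Wtriv ⊔ Wsign :=
    Submodule.mem_sup_left (M := TSq) (Submodule.mem_sup_left (M := TSq) (by rw [Wtwo_eq]; exact Submodule.subset_span (M := V2 ⊗[ℂ] V2) (by simp)))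
  have h11 : TB (1,1) ∈ Wtwo ⊔ Wtriv ⊔ Wsign :=
    Submodule.mem_sup_left (M := TSq) (Submodule.mem_sup_left (M := TSq) (by rw [Wtwo_eq]; exact Submodule.subset_span (M := V2 ⊗[ℂ] V2) (by simp)))
  have htr : TB (1,0) - TB (0,1) ∈ Wtwo ⊔ Wtriv ⊔ Wsign :=
    Submodule.mem_sup_left (M := TSq) (Submodule.mem_sup_right (M := TSq) (by rw [Wtriv_eq]; exact Submodule.subset_span (M := V2 ⊗[ℂ] V2) (by simp)))
  have hsg : TB (0,1) + TB (1,0) ∈ Wtwo ⊔ Wtriv ⊔ Wsign :=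
    Submodule.mem_sup_right (M := TSq) (by rw [Wsign_eq]; exact Submodule.subset_span (M := V2 ⊗[ℂ] V2) (by simp))
  have h01 : TB (0,1) ∈ Wtwo ⊔ Wtriv ⊔ Wsign := by
    have : TB (0,1) = (2⁻¹ : ℂ) • (TB (0,1) + TB (1,0)) - (2⁻¹ : ℂ) • (TB (1,0) - TB (0,1)) := by
      module
    rw [this]
    exact sub_mem (Submodule.smul_mem _ _ hsg) (Submodule.smul_mem _ _ htr)
  have h10 : TB (1,0) ∈ Wtwo ⊔ Wtriv ⊔ Wsign := by
    have : TB (1,0) = (2⁻¹ : ℂ) • (TB (0,1) + TB (1,0)) + (2⁻¹ : ℂ) • (TB (1,0) - TB (0,1)) := by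
      module
    rw [this]
    exact add_mem (Submodule.smul_mem _ _ hsg) (Submodule.smul_mem _ _ htr)
  obtain ⟨i, j⟩ := p
  fin_cases i <;> fin_cases j <;> assumption

lemma pair_indep : LinearIndependent ℂ ![TB (0,0), TB (1,1)] := by
  rw [LinearIndependent.pair_iff]
  intro s t h
  have h0 := congrArg (fun v => TB.repr v (0,0)) h
  have h1 := congrArg (fun v => TB.repr v (1,1)) h
  simp [crd, Prod.ext_iff] at h0 h1
  exact ⟨h0, h1⟩

lemma finrank_Wtwo : Module.finrank ℂ Wtwo = 2 := by
  rw [Wtwo_eq]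
  have hr : ({TB (0,0), TB (1,1)} : Set (V2 ⊗[ℂ] V2)) = Set.range ![TB (0,0), TB (1,1)] := by
    ext z
    simp [Fin.exists_fin_two]
    tauto
  rw [hr]
  exact (finrank_span_eq_card pair_indep).trans (by simp)

lemma finrank_Wtriv : Module.finrank ℂ Wtriv = 1 := by
  rw [Wtriv_eq]; exact finrank_span_singleton wtriv_ne

lemma finrank_Wsign : Module.finrank ℂ Wsign = 1 := by
  rw [Wsign_eq]; exact finrank_span_singleton wsign_ne

end Aux
namespace Aux
section Main
variable {θ : ℝ} {X A : GL (Fin 2) ℂ} {G : Subgroup (GL (Fin 2) ℂ)}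

lemma X_pres_Wtwo (hX : (X : Matrix (Fin 2) (Fin 2) ℂ) = !![0, -1; 1, 0]) :
    X ∈ presSub Wtwo := by
  intro z hz
  rw [Wtwo_eq, Submodule.mem_span_pair] at hz ⊢
  obtain ⟨a, b, rfl⟩ := hz
  refine ⟨b, a, ?_⟩
  rw [map_add, _root_.map_smul, _root_.map_smul, rhoX_00 hX, rhoX_11 hX]
  module

lemma A_pres_Wtwo (hA : (A : Matrix (Fin 2) (Fin 2) ℂ) =
      !![Complex.exp (θ * Complex.I), 0; 0, Complex.exp (-(θ * Complex.I))]) :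
    A ∈ presSub Wtwo := by
  intro z hz
  rw [Wtwo_eq, Submodule.mem_span_pair] at hz ⊢
  obtain ⟨a, b, rfl⟩ := hz
  refine ⟨a * Complex.exp (θ * Complex.I) ^ (expo (0,0)),
    b * Complex.exp (θ * Complex.I) ^ (expo (1,1)), ?_⟩
  simp [map_add, _root_.map_smul, rhoA_TB hA, smul_smul]

lemma X_fix_wtriv (hX : (X : Matrix (Fin 2) (Fin 2) ℂ) = !![0, -1; 1, 0]) :
    X ∈ fixSub (TB (1,0) - TB (0,1)) := by
  show rho X _ = _
  rw [map_sub, rhoX_10 hX, rhoX_01 hX]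
  module

lemma A_fix_wtriv (hA : (A : Matrix (Fin 2) (Fin 2) ℂ) =
      !![Complex.exp (θ * Complex.I), 0; 0, Complex.exp (-(θ * Complex.I))]) :
    A ∈ fixSub (TB (1,0) - TB (0,1)) := by
  show rho A _ = _
  rw [map_sub, rhoA_TB hA, rhoA_TB hA]
  norm_num [expo]

lemma X_sign_wsign (hX : (X : Matrix (Fin 2) (Fin 2) ℂ) = !![0, -1; 1, 0]) :
    rho X (TB (0,1) + TB (1,0)) = -(TB (0,1) + TB (1,0)) := by
  rw [map_add, rhoX_10 hX, rhoX_01 hX]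
  module

lemma A_fix_wsign (hA : (A : Matrix (Fin 2) (Fin 2) ℂ) =
      !![Complex.exp (θ * Complex.I), 0; 0, Complex.exp (-(θ * Complex.I))]) :
    A ∈ fixSub (TB (0,1) + TB (1,0)) := by
  show rho A _ = _
  rw [map_add, rhoA_TB hA, rhoA_TB hA]
  norm_num [expo]

lemma X_pres_span_of_sign {v : V2 ⊗[ℂ] V2} (h : rho X v = -v) :
    X ∈ presSub (Submodule.span ℂ {v}) := by
  intro z hz
  rw [Submodule.mem_span_singleton] at hz ⊢
  obtain ⟨c, rfl⟩ := hz
  refine ⟨-c, ?_⟩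
  rw [_root_.map_smul, h]; module

lemma fix_pres {v : V2 ⊗[ℂ] V2} {g : GL (Fin 2) ℂ} (h : g ∈ fixSub v) :
    g ∈ presSub (Submodule.span ℂ {v}) := by
  intro z hz
  rw [Submodule.mem_span_singleton] at hz ⊢
  obtain ⟨c, rfl⟩ := hz
  refine ⟨c, ?_⟩
  rw [_root_.map_smul, show rho g v = v from h]

-- invariance of the three subspaces
lemma inv_Wtwo (hX : (X : Matrix (Fin 2) (Fin 2) ℂ) = !![0, -1; 1, 0])
    (hA : (A : Matrix (Fin 2) (Fin 2) ℂ) =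
      !![Complex.exp (θ * Complex.I), 0; 0, Complex.exp (-(θ * Complex.I))])
    (hG : G = Subgroup.closure {X, A}) :
    ∀ (g : G) (z : TSq), z ∈ Wtwo → sqRep G g z ∈ Wtwo := fun g z hz =>
  mem_of_closure hG (presSub Wtwo) (X_pres_Wtwo hX) (A_pres_Wtwo hA) g z hz

lemma triv_Wtriv (hX : (X : Matrix (Fin 2) (Fin 2) ℂ) = !![0, -1; 1, 0])
    (hA : (A : Matrix (Fin 2) (Fin 2) ℂ) =
      !![Complex.exp (θ * Complex.I), 0; 0, Complex.exp (-(θ * Complex.I))])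
    (hG : G = Subgroup.closure {X, A}) :
    ∀ (g : G) (z : TSq), z ∈ Wtriv → sqRep G g z = z := by
  intro g z hz
  have hfix := mem_of_closure hG (fixSub (TB (1,0) - TB (0,1)))
    (X_fix_wtriv hX) (A_fix_wtriv hA) g
  rw [Wtriv_eq] at hz
  obtain ⟨c, rfl⟩ := (Submodule.mem_span_singleton (M := V2 ⊗[ℂ] V2)).mp hz
  show rho (g : GL (Fin 2) ℂ) (c • (TB (1,0) - TB (0,1))) = c • (TB (1,0) - TB (0,1))
  rw [_root_.map_smul, show rho (g : GL (Fin 2) ℂ) _ = _ from hfix]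

lemma inv_Wtriv (hX : (X : Matrix (Fin 2) (Fin 2) ℂ) = !![0, -1; 1, 0])
    (hA : (A : Matrix (Fin 2) (Fin 2) ℂ) =
      !![Complex.exp (θ * Complex.I), 0; 0, Complex.exp (-(θ * Complex.I))])
    (hG : G = Subgroup.closure {X, A}) :
    ∀ (g : G) (z : TSq), z ∈ Wtriv → sqRep G g z ∈ Wtriv := by
  intro g z hz
  rw [triv_Wtriv hX hA hG g z hz]
  exact hz

lemma inv_Wsign (hX : (X : Matrix (Fin 2) (Fin 2) ℂ) = !![0, -1; 1, 0])
    (hA : (A : Matrix (Fin 2) (Fin 2) ℂ) =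
      !![Complex.exp (θ * Complex.I), 0; 0, Complex.exp (-(θ * Complex.I))])
    (hG : G = Subgroup.closure {X, A}) :
    ∀ (g : G) (z : TSq), z ∈ Wsign → sqRep G g z ∈ Wsign := by
  intro g z hz
  rw [Wsign_eq] at hz ⊢
  exact mem_of_closure hG (presSub _) (X_pres_span_of_sign (X_sign_wsign hX))
    (fix_pres (A_fix_wsign hA)) g z hz

-- simplicity of one-dimensional spans
lemma simple_of_span_singleton {v : V2 ⊗[ℂ] V2} (hv : v ≠ 0) (q : Submodule ℂ (V2 ⊗[ℂ] V2))
    (hq : q ≤ Submodule.span ℂ {v}) : q = ⊥ ∨ q = Submodule.span ℂ {v} := by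
  by_cases hb : q = ⊥
  · exact Or.inl hb
  · right
    obtain ⟨y, hy, hy0⟩ := Submodule.exists_mem_ne_zero_of_ne_bot hb
    obtain ⟨c, rfl⟩ := Submodule.mem_span_singleton.mp (hq hy)
    have hc : c ≠ 0 := fun h => hy0 (by simp [h])
    refine le_antisymm hq ?_
    rw [Submodule.span_le, Set.singleton_subset_iff]
    have : v = c⁻¹ • (c • v) := by rw [smul_smul, inv_mul_cancel₀ hc, one_smul]
    rw [this]
    exact Submodule.smul_mem _ _ hy

end Main
end Aux
namespace Aux
section Simple
variable {θ : ℝ} {X A : GL (Fin 2) ℂ} {G : Subgroup (GL (Fin 2) ℂ)}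

lemma simple_Wtwo (hθ : Irrational (θ / Real.pi))
    (hX : (X : Matrix (Fin 2) (Fin 2) ℂ) = !![0, -1; 1, 0])
    (hA : (A : Matrix (Fin 2) (Fin 2) ℂ) =
      !![Complex.exp (θ * Complex.I), 0; 0, Complex.exp (-(θ * Complex.I))])
    (hG : G = Subgroup.closure {X, A}) :
    ∀ q : Submodule ℂ TSq, q ≤ Wtwo →
      (∀ (g : G) (z : TSq), z ∈ q → sqRep G g z ∈ q) → q = ⊥ ∨ q = Wtwo := by
  intro q hq hinv
  by_cases hb : q = ⊥
  · exact Or.inl hb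
  right
  set lam := Complex.exp (θ * Complex.I) with hlam
  have hlamne : lam ≠ 0 := Complex.exp_ne_zero _
  obtain ⟨y0, hy, hy0⟩ := Submodule.exists_mem_ne_zero_of_ne_bot hb
  set y : V2 ⊗[ℂ] V2 := y0 with hyy
  replace hy : y ∈ q := hy
  replace hy0 : y ≠ 0 := hy0
  obtain ⟨a, b, hab⟩ := Submodule.mem_span_pair.mp (by rw [← Wtwo_eq]; exact hq hy)
  -- q is invariant under the X and A actions
  have hXq : ∀ z ∈ q, rho X z ∈ q := fun z hz => hinv ⟨X, X_mem hG⟩ z hz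
  have hAq : ∀ z ∈ q, rho A z ∈ q := fun z hz => hinv ⟨A, A_mem hG⟩ z hz
  -- key: t00 ∈ q or t11 ∈ q
  have key : TB (0,0) ∈ q ∨ TB (1,1) ∈ q := by
    by_cases ha : a = 0
    · right
      have hbne : b ≠ 0 := by
        intro hbz; apply hy0; rw [← hab, ha, hbz]; simp
      have : TB (1,1) = b⁻¹ • y := by
        rw [← hab, ha]; simp [smul_smul, inv_mul_cancel₀ hbne]
      rw [this]
      exact Submodule.smul_mem _ _ hy
    · left
      have hAy : rho A y ∈ q := hAq y hy
      have hval : rho A y = (a * lam ^ (2:ℤ)) • TB (0,0) + (b * lam ^ (-2:ℤ)) • TB (1,1) := by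
        rw [← hab, map_add, _root_.map_smul, _root_.map_smul, rhoA_TB hA, rhoA_TB hA]
        norm_num [expo, smul_smul, hlam]
      have hu : rho A y - lam ^ (-2:ℤ) • y ∈ q :=
        sub_mem hAy (Submodule.smul_mem _ _ hy)
      have huval : rho A y - lam ^ (-2:ℤ) • y = (a * (lam ^ (2:ℤ) - lam ^ (-2:ℤ))) • TB (0,0) := by
        rw [hval, ← hab]
        module
      have hcne : a * (lam ^ (2:ℤ) - lam ^ (-2:ℤ)) ≠ 0 :=
        mul_ne_zero ha (sub_ne_zero.mpr (zpow_exp_ne hθ (by norm_num)))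
      have : TB (0,0) = (a * (lam ^ (2:ℤ) - lam ^ (-2:ℤ)))⁻¹ •
          (rho A y - lam ^ (-2:ℤ) • y) := by
        rw [huval, smul_smul, inv_mul_cancel₀ hcne, one_smul]
      rw [this]
      exact Submodule.smul_mem _ _ hu
  have hboth : TB (0,0) ∈ q ∧ TB (1,1) ∈ q := by
    rcases key with h | h
    · exact ⟨h, by have := hXq _ h; rwa [rhoX_00 hX] at this⟩
    · exact ⟨by have := hXq _ h; rwa [rhoX_11 hX] at this, h⟩
  refine le_antisymm hq ?_
  rw [Wtwo_eq]
  refine (Submodule.span_le (M := TSq) (p := q) (s := {TB (0,0), TB (1,1)})).mpr ?_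
  rintro z (rfl | rfl)
  exacts [hboth.1, hboth.2]

lemma simple_Wtriv : ∀ q : Submodule ℂ TSq, q ≤ Wtriv → q = ⊥ ∨ q = Wtriv := by
  intro q hq
  have := simple_of_span_singleton wtriv_ne q (by rwa [← Wtriv_eq])
  rwa [← Wtriv_eq] at this

lemma simple_Wsign : ∀ q : Submodule ℂ TSq, q ≤ Wsign → q = ⊥ ∨ q = Wsign := by
  intro q hq
  have := simple_of_span_singleton wsign_ne q (by rwa [← Wsign_eq])
  rwa [← Wsign_eq] at this

end Simple
end Aux
namespace Aux
section Endo
variable {θ : ℝ} {X A : GL (Fin 2) ℂ} {G : Subgroup (GL (Fin 2) ℂ)}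

def sw (p : Fin 2 × Fin 2) : Fin 2 × Fin 2 := (p.1 + 1, p.2 + 1)
def eps (p : Fin 2 × Fin 2) : ℂ := if p.1 = p.2 then 1 else -1

lemma rhoX_TB (hX : (X : Matrix (Fin 2) (Fin 2) ℂ) = !![0, -1; 1, 0]) (p : Fin 2 × Fin 2) :
    rho X (TB p) = eps p • TB (sw p) := by
  obtain ⟨i, j⟩ := p
  fin_cases i <;> fin_cases j <;>
    simp [eps, sw, -Prod.mk_zero_zero, -Prod.mk_one_one, neg_smul, one_smul,
      rhoX_00 hX, rhoX_01 hX, rhoX_10 hX, rhoX_11 hX] <;> module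

lemma eps_sw (p : Fin 2 × Fin 2) : eps (sw p) = eps p := by
  obtain ⟨i, j⟩ := p
  fin_cases i <;> fin_cases j <;> simp [eps, sw]

lemma sw_sw (p : Fin 2 × Fin 2) : sw (sw p) = p := by
  obtain ⟨i, j⟩ := p
  fin_cases i <;> fin_cases j <;> simp [sw]

lemma reprA (hA : (A : Matrix (Fin 2) (Fin 2) ℂ) =
      !![Complex.exp (θ * Complex.I), 0; 0, Complex.exp (-(θ * Complex.I))])
    (q : Fin 2 × Fin 2) (z : V2 ⊗[ℂ] V2) :
    TB.repr (rho A z) q = Complex.exp (θ * Complex.I) ^ expo q * TB.repr z q := by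
  have h : TB.coord q ∘ₗ rho A = (Complex.exp (θ * Complex.I) ^ expo q) • TB.coord q := by
    apply TB.ext; intro p
    by_cases hpq : p = q
    · subst hpq
      simp [Module.Basis.coord_apply, rhoA_TB hA, crd]
    · simp [Module.Basis.coord_apply, rhoA_TB hA, crd, hpq]
  simpa [Module.Basis.coord_apply] using congrArg (fun L => L z) h

lemma reprX (hX : (X : Matrix (Fin 2) (Fin 2) ℂ) = !![0, -1; 1, 0])
    (q : Fin 2 × Fin 2) (z : V2 ⊗[ℂ] V2) :
    TB.repr (rho X z) q = eps q * TB.repr z (sw q) := by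
  have h : TB.coord q ∘ₗ rho X = eps q • TB.coord (sw q) := by
    apply TB.ext; intro p
    by_cases hpq : p = sw q
    · subst hpq
      simp [Module.Basis.coord_apply, rhoX_TB hX, crd, sw_sw, eps_sw]
    · have h2 : sw p ≠ q := fun h => hpq (by rw [← h, sw_sw])
      simp [Module.Basis.coord_apply, rhoX_TB hX, crd, hpq, h2]
  simpa [Module.Basis.coord_apply] using congrArg (fun L => L z) h

def fone : V2 ⊗[ℂ] V2 →ₗ[ℂ] V2 ⊗[ℂ] V2 :=
  TB.constr ℂ (fun p => if p.1 = p.2 then TB p else 0)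
def ftwo : V2 ⊗[ℂ] V2 →ₗ[ℂ] V2 ⊗[ℂ] V2 :=
  TB.constr ℂ (fun p => if p.1 = p.2 then 0 else TB p)
def fthree : V2 ⊗[ℂ] V2 →ₗ[ℂ] V2 ⊗[ℂ] V2 :=
  TB.constr ℂ (fun p => if p.1 = p.2 then 0 else TB (sw p))

lemma fone_TB (p : Fin 2 × Fin 2) : fone (TB p) = if p.1 = p.2 then TB p else 0 :=
  TB.constr_basis ℂ _ p
lemma ftwo_TB (p : Fin 2 × Fin 2) : ftwo (TB p) = if p.1 = p.2 then 0 else TB p :=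
  TB.constr_basis ℂ _ p
lemma fthree_TB (p : Fin 2 × Fin 2) : fthree (TB p) = if p.1 = p.2 then 0 else TB (sw p) :=
  TB.constr_basis ℂ _ p

lemma fone_comm_X (hX : (X : Matrix (Fin 2) (Fin 2) ℂ) = !![0, -1; 1, 0]) :
    fone ∘ₗ rho X = rho X ∘ₗ fone := by
  apply TB.ext; intro p
  obtain ⟨i, j⟩ := p
  fin_cases i <;> fin_cases j <;>
    simp [LinearMap.comp_apply, rhoX_TB hX, fone_TB, sw, eps, -Prod.mk_zero_zero, -Prod.mk_one_one,
      _root_.map_smul]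

lemma ftwo_comm_X (hX : (X : Matrix (Fin 2) (Fin 2) ℂ) = !![0, -1; 1, 0]) :
    ftwo ∘ₗ rho X = rho X ∘ₗ ftwo := by
  apply TB.ext; intro p
  obtain ⟨i, j⟩ := p
  fin_cases i <;> fin_cases j <;>
    simp [LinearMap.comp_apply, rhoX_TB hX, ftwo_TB, sw, eps, -Prod.mk_zero_zero, -Prod.mk_one_one,
      _root_.map_smul]

lemma fthree_comm_X (hX : (X : Matrix (Fin 2) (Fin 2) ℂ) = !![0, -1; 1, 0]) :
    fthree ∘ₗ rho X = rho X ∘ₗ fthree := by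
  apply TB.ext; intro p
  obtain ⟨i, j⟩ := p
  fin_cases i <;> fin_cases j <;>
    simp [LinearMap.comp_apply, rhoX_TB hX, fthree_TB, sw, eps, -Prod.mk_zero_zero, -Prod.mk_one_one,
      _root_.map_smul]

lemma fone_comm_A (hA : (A : Matrix (Fin 2) (Fin 2) ℂ) =
      !![Complex.exp (θ * Complex.I), 0; 0, Complex.exp (-(θ * Complex.I))]) :
    fone ∘ₗ rho A = rho A ∘ₗ fone := by
  apply TB.ext; intro p
  obtain ⟨i, j⟩ := p
  fin_cases i <;> fin_cases j <;>
    simp [LinearMap.comp_apply, rhoA_TB hA, fone_TB, expo, -Prod.mk_zero_zero, -Prod.mk_one_one,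
      _root_.map_smul]

lemma ftwo_comm_A (hA : (A : Matrix (Fin 2) (Fin 2) ℂ) =
      !![Complex.exp (θ * Complex.I), 0; 0, Complex.exp (-(θ * Complex.I))]) :
    ftwo ∘ₗ rho A = rho A ∘ₗ ftwo := by
  apply TB.ext; intro p
  obtain ⟨i, j⟩ := p
  fin_cases i <;> fin_cases j <;>
    simp [LinearMap.comp_apply, rhoA_TB hA, ftwo_TB, expo, -Prod.mk_zero_zero, -Prod.mk_one_one,
      _root_.map_smul]

lemma fthree_comm_A (hA : (A : Matrix (Fin 2) (Fin 2) ℂ) =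
      !![Complex.exp (θ * Complex.I), 0; 0, Complex.exp (-(θ * Complex.I))]) :
    fthree ∘ₗ rho A = rho A ∘ₗ fthree := by
  apply TB.ext; intro p
  obtain ⟨i, j⟩ := p
  fin_cases i <;> fin_cases j <;>
    simp [LinearMap.comp_apply, rhoA_TB hA, fthree_TB, expo, sw, -Prod.mk_zero_zero, -Prod.mk_one_one,
      _root_.map_smul]

def Tco : (V2 ⊗[ℂ] V2 →ₗ[ℂ] V2 ⊗[ℂ] V2) →ₗ[ℂ] (Fin 3 → ℂ) where
  toFun f := ![TB.repr (f (TB (0,0))) (0,0), TB.repr (f (TB (0,1))) (0,1),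
    TB.repr (f (TB (0,1))) (1,0)]
  map_add' f g := by
    funext i
    fin_cases i <;> simp
  map_smul' a f := by
    funext i
    fin_cases i <;> simp

lemma mem_equivEnd_of_comm (hG : G = Subgroup.closure {X, A})
    (f : V2 ⊗[ℂ] V2 →ₗ[ℂ] V2 ⊗[ℂ] V2)
    (hfX : f ∘ₗ rho X = rho X ∘ₗ f) (hfA : f ∘ₗ rho A = rho A ∘ₗ f) :
    f ∈ equivEnd (sqRep G) := by
  intro g
  exact mem_of_closure hG (commSub f) hfX hfA g

end Endo
end Aux
namespace Aux
section Endo2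
variable {θ : ℝ} {X A : GL (Fin 2) ℂ} {G : Subgroup (GL (Fin 2) ℂ)}

lemma comm_eq_combo (hθ : Irrational (θ / Real.pi))
    (hX : (X : Matrix (Fin 2) (Fin 2) ℂ) = !![0, -1; 1, 0])
    (hA : (A : Matrix (Fin 2) (Fin 2) ℂ) =
      !![Complex.exp (θ * Complex.I), 0; 0, Complex.exp (-(θ * Complex.I))])
    (f : V2 ⊗[ℂ] V2 →ₗ[ℂ] V2 ⊗[ℂ] V2)
    (hfX : f ∘ₗ rho X = rho X ∘ₗ f) (hfA : f ∘ₗ rho A = rho A ∘ₗ f) :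
    f = (Tco f 0) • fone + (Tco f 1) • ftwo + (Tco f 2) • fthree := by
  set lam := Complex.exp (θ * Complex.I) with hlam
  -- coordinates of f
  set c : (Fin 2 × Fin 2) → (Fin 2 × Fin 2) → ℂ :=
    fun p q => TB.repr (f (TB p)) q with hc
  -- relation from commuting with A
  have relA : ∀ p q, lam ^ expo p * c p q = lam ^ expo q * c p q := by
    intro p q
    have h := congrArg (fun F => TB.repr (F (TB p)) q) hfA
    simp only [LinearMap.comp_apply] at h
    rw [rhoA_TB hA, _root_.map_smul, _root_.map_smul, Finsupp.smul_apply, smul_eq_mul,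
      reprA hA] at h
    exact h
  have zero : ∀ p q, expo p ≠ expo q → c p q = 0 := by
    intro p q hne
    have h := relA p q
    have h2 : (lam ^ expo p - lam ^ expo q) * c p q = 0 := by linear_combination h
    rcases mul_eq_zero.mp h2 with h3 | h3
    · exact absurd (sub_eq_zero.mp h3) (zpow_exp_ne hθ hne)
    · exact h3
  -- relation from commuting with X
  have relX : ∀ p q, eps p * c (sw p) q = eps q * c p (sw q) := by
    intro p q
    have h := congrArg (fun F => TB.repr (F (TB p)) q) hfX
    simp only [LinearMap.comp_apply] at h
    rw [rhoX_TB hX, _root_.map_smul, _root_.map_smul, Finsupp.smul_apply, smul_eq_mul,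
      reprX hX] at h
    exact h
  -- relations among the surviving coefficients
  have h1100 : c (1,1) (1,1) = c (0,0) (0,0) := by
    have h := relX (0,0) (1,1)
    simpa [eps, sw, -Prod.mk_zero_zero, -Prod.mk_one_one] using h
  have h1010 : c (1,0) (1,0) = c (0,1) (0,1) := by
    have h := relX (0,1) (1,0)
    simp only [eps, sw] at h
    norm_num at h
    exact h
  have h1001 : c (1,0) (0,1) = c (0,1) (1,0) := by
    have h := relX (0,1) (0,1)
    simp only [eps, sw] at h
    norm_num at h
    exact h
  -- expansion of values of f
  have hv : ∀ p, f (TB p) =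
      c p (0,0) • TB (0,0) + c p (0,1) • TB (0,1) + c p (1,0) • TB (1,0) +
        c p (1,1) • TB (1,1) := by
    intro p
    have e := TB.sum_repr (f (TB p))
    rw [Fintype.sum_prod_type, Fin.sum_univ_two, Fin.sum_univ_two, Fin.sum_univ_two] at e
    rw [← e, hc]
    module
  -- f equals the explicit combination
  have heq : f = c (0,0) (0,0) • fone + c (0,1) (0,1) • ftwo + c (0,1) (1,0) • fthree := by
    set F := c (0,0) (0,0) • fone + c (0,1) (0,1) • ftwo + c (0,1) (1,0) • fthree with hF
    have case00 : f (TB (0,0)) = F (TB (0,0)) := by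
      rw [hv (0,0), zero _ (0,1) (by norm_num [expo]), zero _ (1,0) (by norm_num [expo]),
        zero _ (1,1) (by norm_num [expo]), hF]
      simp [fone_TB, ftwo_TB, fthree_TB, -Prod.mk_zero_zero, -Prod.mk_one_one]
    have case01 : f (TB (0,1)) = F (TB (0,1)) := by
      rw [hv (0,1), zero _ (0,0) (by norm_num [expo]), zero _ (1,1) (by norm_num [expo]), hF]
      simp [fone_TB, ftwo_TB, fthree_TB, sw, -Prod.mk_zero_zero, -Prod.mk_one_one]
    have case10 : f (TB (1,0)) = F (TB (1,0)) := by
      rw [hv (1,0), zero _ (0,0) (by norm_num [expo]), zero _ (1,1) (by norm_num [expo]),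
        h1010, h1001, hF]
      simp [fone_TB, ftwo_TB, fthree_TB, sw, -Prod.mk_zero_zero, -Prod.mk_one_one]
      module
    have case11 : f (TB (1,1)) = F (TB (1,1)) := by
      rw [hv (1,1), zero _ (0,1) (by norm_num [expo]), zero _ (1,0) (by norm_num [expo]),
        zero (1,1) (0,0) (by norm_num [expo]), h1100, hF]
      simp [fone_TB, ftwo_TB, fthree_TB, -Prod.mk_zero_zero, -Prod.mk_one_one]
    apply TB.ext
    intro p
    obtain ⟨i, j⟩ := p
    fin_cases i <;> fin_cases j
    · exact case00
    · exact case01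
    · exact case10
    · exact case11
  have e0 : Tco f 0 = c (0,0) (0,0) := rfl
  have e1 : Tco f 1 = c (0,1) (0,1) := rfl
  have e2 : Tco f 2 = c (0,1) (1,0) := rfl
  rw [e0, e1, e2]
  exact heq

end Endo2
end Aux
namespace Aux
section Endo3
variable {θ : ℝ} {X A : GL (Fin 2) ℂ} {G : Subgroup (GL (Fin 2) ℂ)}

lemma Tco_combo (a b c : ℂ) : Tco (a • fone + b • ftwo + c • fthree) = ![a, b, c] := by
  funext i
  fin_cases i <;>
    simp [Tco, fone_TB, ftwo_TB, fthree_TB, sw, crd, Prod.ext_iff,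
      -Prod.mk_zero_zero, -Prod.mk_one_one]

lemma combo_mem (hX : (X : Matrix (Fin 2) (Fin 2) ℂ) = !![0, -1; 1, 0])
    (hA : (A : Matrix (Fin 2) (Fin 2) ℂ) =
      !![Complex.exp (θ * Complex.I), 0; 0, Complex.exp (-(θ * Complex.I))])
    (hG : G = Subgroup.closure {X, A}) (a b c : ℂ) :
    a • fone + b • ftwo + c • fthree ∈ equivEnd (sqRep G) := by
  refine add_mem (add_mem ?_ ?_) ?_ <;> apply Submodule.smul_mem
  · exact mem_equivEnd_of_comm hG fone (fone_comm_X hX) (fone_comm_A hA)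
  · exact mem_equivEnd_of_comm hG ftwo (ftwo_comm_X hX) (ftwo_comm_A hA)
  · exact mem_equivEnd_of_comm hG fthree (fthree_comm_X hX) (fthree_comm_A hA)

lemma finrank_equivEnd (hθ : Irrational (θ / Real.pi))
    (hX : (X : Matrix (Fin 2) (Fin 2) ℂ) = !![0, -1; 1, 0])
    (hA : (A : Matrix (Fin 2) (Fin 2) ℂ) =
      !![Complex.exp (θ * Complex.I), 0; 0, Complex.exp (-(θ * Complex.I))])
    (hG : G = Subgroup.closure {X, A}) :
    Module.finrank ℂ (equivEnd (sqRep G)) = 3 := by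
  have hcomm : ∀ f : V2 ⊗[ℂ] V2 →ₗ[ℂ] V2 ⊗[ℂ] V2, f ∈ equivEnd (sqRep G) →
      f ∘ₗ rho X = rho X ∘ₗ f ∧ f ∘ₗ rho A = rho A ∘ₗ f := by
    intro f hf
    exact ⟨hf ⟨X, X_mem hG⟩, hf ⟨A, A_mem hG⟩⟩
  let T : equivEnd (sqRep G) →ₗ[ℂ] (Fin 3 → ℂ) := Tco ∘ₗ Submodule.subtype _
  have hinj : Function.Injective T := by
    intro f g hfg
    obtain ⟨hfX, hfA⟩ := hcomm f.1 f.2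
    obtain ⟨hgX, hgA⟩ := hcomm g.1 g.2
    have hcf := comm_eq_combo hθ hX hA f.1 hfX hfA
    have hcg := comm_eq_combo hθ hX hA g.1 hgX hgA
    have h0 : Tco f.1 0 = Tco g.1 0 := congrArg (fun v => v 0) hfg
    have h1 : Tco f.1 1 = Tco g.1 1 := congrArg (fun v => v 1) hfg
    have h2 : Tco f.1 2 = Tco g.1 2 := congrArg (fun v => v 2) hfg
    apply Subtype.ext
    rw [hcf, hcg, h0, h1, h2]
  have hsurj : Function.Surjective T := by
    intro v
    refine ⟨⟨v 0 • fone + v 1 • ftwo + v 2 • fthree, combo_mem hX hA hG _ _ _⟩, ?_⟩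
    show Tco (v 0 • fone + v 1 • ftwo + v 2 • fthree) = v
    rw [Tco_combo]
    funext i
    fin_cases i <;> rfl
  have e : equivEnd (sqRep G) ≃ₗ[ℂ] (Fin 3 → ℂ) :=
    LinearEquiv.ofBijective T ⟨hinj, hsurj⟩
  rw [e.finrank_eq]
  simp

end Endo3
end Aux
namespace Aux
section NonIso
variable {θ : ℝ} {X A : GL (Fin 2) ℂ} {G : Subgroup (GL (Fin 2) ℂ)}

lemma sign_action (hX : (X : Matrix (Fin 2) (Fin 2) ℂ) = !![0, -1; 1, 0])
    (hA : (A : Matrix (Fin 2) (Fin 2) ℂ) =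
      !![Complex.exp (θ * Complex.I), 0; 0, Complex.exp (-(θ * Complex.I))]) :
    ∀ g : G, ((g : GL (Fin 2) ℂ) = A → ∀ z ∈ Wsign, sqRep G g z = z) ∧
      ((g : GL (Fin 2) ℂ) = X → ∀ z ∈ Wsign, sqRep G g z = -z) := by
  intro g
  constructor
  · intro hgA z hz
    rw [Wsign_eq] at hz
    obtain ⟨c, rfl⟩ := (Submodule.mem_span_singleton (M := V2 ⊗[ℂ] V2)).mp hz
    show rho (g : GL (Fin 2) ℂ) (c • (TB (0,1) + TB (1,0))) = c • (TB (0,1) + TB (1,0))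
    rw [hgA, _root_.map_smul, show rho A _ = _ from A_fix_wsign hA]
  · intro hgX z hz
    rw [Wsign_eq] at hz
    obtain ⟨c, rfl⟩ := (Submodule.mem_span_singleton (M := V2 ⊗[ℂ] V2)).mp hz
    show rho (g : GL (Fin 2) ℂ) (c • (TB (0,1) + TB (1,0))) = -(c • (TB (0,1) + TB (1,0)))
    rw [hgX, _root_.map_smul, X_sign_wsign hX]
    module

lemma noniso_two_triv :
    ¬ ∃ f : Wtwo ≃ₗ[ℂ] Wtriv, ∀ (g : G) (w w' : Wtwo),
      sqRep G g (w : TSq) = (w' : TSq) → sqRep G g (f w : TSq) = (f w' : TSq) := by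
  rintro ⟨f, -⟩
  have := f.finrank_eq
  rw [finrank_Wtwo, finrank_Wtriv] at this
  norm_num at this

lemma noniso_two_sign :
    ¬ ∃ f : Wtwo ≃ₗ[ℂ] Wsign, ∀ (g : G) (w w' : Wtwo),
      sqRep G g (w : TSq) = (w' : TSq) → sqRep G g (f w : TSq) = (f w' : TSq) := by
  rintro ⟨f, -⟩
  have := f.finrank_eq
  rw [finrank_Wtwo, finrank_Wsign] at this
  norm_num at this

set_option synthInstance.maxHeartbeats 1000000 in
lemma noniso_triv_sign (hX : (X : Matrix (Fin 2) (Fin 2) ℂ) = !![0, -1; 1, 0])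
    (hA : (A : Matrix (Fin 2) (Fin 2) ℂ) =
      !![Complex.exp (θ * Complex.I), 0; 0, Complex.exp (-(θ * Complex.I))])
    (hG : G = Subgroup.closure {X, A}) :
    ¬ ∃ f : Wtriv ≃ₗ[ℂ] Wsign, ∀ (g : G) (w w' : Wtriv),
      sqRep G g (w : TSq) = (w' : TSq) → sqRep G g (f w : TSq) = (f w' : TSq) := by
  rintro ⟨f, hf⟩
  have hmem : (TB (1,0) - TB (0,1) : V2 ⊗[ℂ] V2) ∈ Wtriv := by
    rw [Wtriv_eq]; exact Submodule.subset_span (M := V2 ⊗[ℂ] V2) rfl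
  set gX : G := ⟨X, X_mem hG⟩ with hgX
  set w : Wtriv := ⟨TB (1,0) - TB (0,1), hmem⟩ with hw
  have hfix : sqRep G gX (w : TSq) = (w : TSq) := by
    show rho (gX : GL (Fin 2) ℂ) _ = _
    exact X_fix_wtriv hX
  have h1 : sqRep G gX (f w : TSq) = (f w : TSq) := hf gX w w hfix
  have h2 : sqRep G gX (f w : TSq) = -(f w : TSq) :=
    (sign_action hX hA gX).2 rfl _ (f w).2
  have h3 : (f w : TSq) = 0 := by
    have h4 : (f w : TSq) = -(f w : TSq) := h1.symm.trans h2
    have h5 : (f w : TSq) + (f w : TSq) = 0 := by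
      nth_rewrite 2 [h4]
      simp
    have h6 : (2 : ℂ) • (f w : TSq) = 0 := by rw [two_smul]; exact h5
    simpa using (smul_eq_zero.mp h6).resolve_left (by norm_num)
  have h7 : f w = 0 := by
    apply Subtype.ext
    simpa using h3
  have h8 : w = 0 := by
    rwa [LinearEquiv.map_eq_zero_iff] at h7
  have h9 : TB (1,0) - TB (0,1) = (0 : V2 ⊗[ℂ] V2) := by
    have := congrArg (Subtype.val) h8
    simp [hw] at this; exact this
  exact wtriv_ne h9

end NonIso
end Aux

/-- The `Dic∞`-representation `V ⊗ V` decomposes as the direct sum of three pairwise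
non-isomorphic simple subrepresentations: the two-dimensional simple `V₂` spanned by
`v₁⊗v₁, v₂⊗v₂`, the trivial representation spanned by `v₂⊗v₁ − v₁⊗v₂`, and the
one-dimensional representation `𝟙̄` spanned by `v₁⊗v₂ + v₂⊗v₁` (on which `a` acts by `1`
and `x` by `−1`); consequently `dim_ℂ End_{Dic∞}(V⊗V) = 3`. -/
theorem tensorSquare_decomposition_dicyclicInf
    (θ : ℝ) (hθ : Irrational (θ / Real.pi)) (X A : GL (Fin 2) ℂ)
    (hX : (X : Matrix (Fin 2) (Fin 2) ℂ) = !![0, -1; 1, 0])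
    (hA : (A : Matrix (Fin 2) (Fin 2) ℂ) =
      !![Complex.exp (θ * Complex.I), 0; 0, Complex.exp (-(θ * Complex.I))])
    (G : Subgroup (GL (Fin 2) ℂ)) (hG : G = Subgroup.closure {X, A}) :
    -- the three subspaces are subrepresentations:
    (∀ (g : G) (z : TSq), z ∈ Wtwo → sqRep G g z ∈ Wtwo) ∧
    (∀ (g : G) (z : TSq), z ∈ Wtriv → sqRep G g z ∈ Wtriv) ∧
    (∀ (g : G) (z : TSq), z ∈ Wsign → sqRep G g z ∈ Wsign) ∧
    -- they form a direct sum decomposition of `V ⊗ V`: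
    (Wtwo ⊔ Wtriv ⊔ Wsign = (⊤ : Submodule ℂ TSq)) ∧
    Disjoint Wtwo (Wtriv ⊔ Wsign) ∧ Disjoint Wtriv Wsign ∧
    -- of dimensions 2, 1, 1:
    Module.finrank ℂ Wtwo = 2 ∧ Module.finrank ℂ Wtriv = 1 ∧ Module.finrank ℂ Wsign = 1 ∧
    -- each summand is simple:
    (∀ q : Submodule ℂ TSq, q ≤ Wtwo →
      (∀ (g : G) (z : TSq), z ∈ q → sqRep G g z ∈ q) → q = ⊥ ∨ q = Wtwo) ∧
    (∀ q : Submodule ℂ TSq, q ≤ Wtriv →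
      (∀ (g : G) (z : TSq), z ∈ q → sqRep G g z ∈ q) → q = ⊥ ∨ q = Wtriv) ∧
    (∀ q : Submodule ℂ TSq, q ≤ Wsign →
      (∀ (g : G) (z : TSq), z ∈ q → sqRep G g z ∈ q) → q = ⊥ ∨ q = Wsign) ∧
    -- the action on `Wtriv` is trivial:
    (∀ (g : G) (z : TSq), z ∈ Wtriv → sqRep G g z = z) ∧
    -- on `Wsign = 𝟙̄`, the generator `a` acts by `1` and the generator `x` by `−1`:
    (∀ g : G, ((g : GL (Fin 2) ℂ) = A → ∀ z ∈ Wsign, sqRep G g z = z) ∧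
      ((g : GL (Fin 2) ℂ) = X → ∀ z ∈ Wsign, sqRep G g z = -z)) ∧
    -- the three summands are pairwise non-isomorphic as `Dic∞`-representations:
    (¬ ∃ f : Wtwo ≃ₗ[ℂ] Wtriv, ∀ (g : G) (w w' : Wtwo),
      sqRep G g (w : TSq) = (w' : TSq) → sqRep G g (f w : TSq) = (f w' : TSq)) ∧
    (¬ ∃ f : Wtwo ≃ₗ[ℂ] Wsign, ∀ (g : G) (w w' : Wtwo),
      sqRep G g (w : TSq) = (w' : TSq) → sqRep G g (f w : TSq) = (f w' : TSq)) ∧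
    (¬ ∃ f : Wtriv ≃ₗ[ℂ] Wsign, ∀ (g : G) (w w' : Wtriv),
      sqRep G g (w : TSq) = (w' : TSq) → sqRep G g (f w : TSq) = (f w' : TSq)) ∧
    -- consequently the endomorphism algebra is three-dimensional:
    Module.finrank ℂ (equivEnd (sqRep G)) = 3 := by
  exact ⟨Aux.inv_Wtwo hX hA hG, Aux.inv_Wtriv hX hA hG, Aux.inv_Wsign hX hA hG,
    Aux.sup_top, Aux.disj_two, Aux.disj_ts,
    Aux.finrank_Wtwo, Aux.finrank_Wtriv, Aux.finrank_Wsign,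
    Aux.simple_Wtwo hθ hX hA hG,
    (fun q hq _ => Aux.simple_Wtriv q hq),
    (fun q hq _ => Aux.simple_Wsign q hq),
    Aux.triv_Wtriv hX hA hG,
    Aux.sign_action hX hA,
    Aux.noniso_two_triv, Aux.noniso_two_sign,
    Aux.noniso_triv_sign hX hA hG,
    Aux.finrank_equivEnd hθ hX hA hG⟩
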